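/- The measure μ with density x ↦ 2/(log(2+√3)·(1−(2−√3)x)(1+√3x)) with respect to Lebesgue measure on (0,1) is a probability measure, and it is invariant under the spliced continued fraction map T: for every Borel set E ⊆ [0,1], μ(T^{-1}E) = μ(E). -/

import Mathlib

open MeasureTheory Real Set Filter Topology

namespace SCF

/-- The involution `ι(x) = (1−x)/(1+x)`. -/
noncomputable def iota (x : ℝ) : ℝ := (1 - x) / (1 + x)

/-- Even continued-fraction step.  For `y ∈ (0,1/2]` one has
`⌊(1/y+1)/2⌋ = k` whenever `1/y ∈ (2k−1, 2k+1)`, so `Te y = |1/y − 2k|`;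
explicitly `Te y = 1/y − 2` on `[1/3,1/2]`, `Te y = 1/y − 2k` on
`[1/(2k+1), 1/(2k))` and `Te y = 2k − 1/y` on `[1/(2k), 1/(2k−1))` (`k ≥ 2`). -/
noncomputable def Te (y : ℝ) : ℝ := |1 / y - 2 * (⌊(1 / y + 1) / 2⌋ : ℝ)|

/-- The spliced continued fraction (SCF) map `T : [0,1] → [0,1]`, with
`T 0 = 0`, `T 1 = 1`.  On `(0,1/2]` it is the even continued fraction map
(see `Te`), and on `(1/2,1)` it is the odd–odd map, which is the conjugate
`ι ∘ Te ∘ ι` of the even map; this agrees with the branchwise definition: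
`T x = (k x − (k−1))/(k − (k+1) x)` on `((k−1)/k, (2k−1)/(2k+1)]` and
`T x = (k − (k+1) x)/(k x − (k−1))` on `((2k−1)/(2k+1), k/(k+1)]` for `k ≥ 2`. -/
noncomputable def T (x : ℝ) : ℝ :=
  if x ≤ 0 then 0
  else if 1 ≤ x then 1
  else if x ≤ 1 / 2 then Te x
  else iota (Te (iota x))

/-- Parity label of a digit: `e` (even cusp) or `o` (odd–odd cusp). -/
inductive Par | e | o
deriving DecidableEq

/-- A candidate SCF digit `(a, ε)_s`. -/
structure Digit where
  a : ℤ
  eps : ℤ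
  s : Par
deriving DecidableEq

/-- The digit set `𝒜 = {(k,ε)_s : k ≥ 2, ε = ±1, s ∈ {e,o}} ∪ {(1,+1)_e}`. -/
def Digit.Valid (d : Digit) : Prop :=
  (2 ≤ d.a ∧ (d.eps = 1 ∨ d.eps = -1)) ∨ (d.a = 1 ∧ d.eps = 1 ∧ d.s = Par.e)

/-- The branch intervals `I_{(a,ε)_s}` of the SCF map. -/
noncomputable def branch (d : Digit) : Set ℝ :=
  match d.s with
  | Par.e =>
      if d.a = 1 then Set.Icc (1/3 : ℝ) (1/2)
      else if d.eps = 1 then Set.Ico (1 / (2 * (d.a : ℝ) + 1)) (1 / (2 * (d.a : ℝ)))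
      else Set.Ico (1 / (2 * (d.a : ℝ))) (1 / (2 * (d.a : ℝ) - 1))
  | Par.o =>
      if d.eps = 1 then
        Set.Ioc ((2 * (d.a : ℝ) - 1) / (2 * (d.a : ℝ) + 1)) ((d.a : ℝ) / ((d.a : ℝ) + 1))
      else
        Set.Ioc (((d.a : ℝ) - 1) / (d.a : ℝ)) ((2 * (d.a : ℝ) - 1) / (2 * (d.a : ℝ) + 1))

open Classical in
/-- The SCF digit of a point `y` (the unique valid digit `d` with `y ∈ I_d`;
well defined for every `y ∈ (0,1)`). -/
noncomputable def digit (y : ℝ) : Digit :=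
  if h : ∃ d : Digit, d.Valid ∧ y ∈ branch d then h.choose else ⟨1, 1, Par.e⟩

/-- The `n`-th SCF digit `(a_n(x), ε_n(x))_{s_n(x)}` of `x`, `n ≥ 1`,
determined by `T^[n−1] x ∈ I_{(a_n,ε_n)_{s_n}}`. -/
noncomputable def dig (n : ℕ) (x : ℝ) : Digit := digit (T^[n - 1] x)

/-- The `n`-th SCF partial quotient `a_n(x)`. -/
noncomputable def a (n : ℕ) (x : ℝ) : ℤ := (dig n x).a

/-- The invariant density `f_μ`. -/
noncomputable def fdens (x : ℝ) : ℝ :=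
  2 / (Real.log (2 + Real.sqrt 3) * (1 - (2 - Real.sqrt 3) * x) * (1 + Real.sqrt 3 * x))

/-- The absolutely continuous `T`-invariant probability measure `μ` on `(0,1)`. -/
noncomputable def mu : Measure ℝ :=
  (volume.restrict (Set.Ioo (0 : ℝ) 1)).withDensity fun x => ENNReal.ofReal (fdens x)

/-- The inverse branches `h_{(a,ε)_s}` of the SCF map `T`. -/
noncomputable def h (d : Digit) (x : ℝ) : ℝ :=
  match d.s with
  | Par.e => 1 / (2 * (d.a : ℝ) + (d.eps : ℝ) * x)
  | Par.o =>
      if d.eps = 1 then (((d.a : ℝ) - 1) * x + (d.a : ℝ)) / ((d.a : ℝ) * x + ((d.a : ℝ) + 1))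
      else ((d.a : ℝ) * x + ((d.a : ℝ) - 1)) / (((d.a : ℝ) + 1) * x + (d.a : ℝ))

/-- Composed inverse branch `h_{A^{(n)}} = h_{A₁} ∘ ⋯ ∘ h_{A_n}` of a word. -/
noncomputable def hWord (l : List Digit) : ℝ → ℝ :=
  l.foldr (fun d g => h d ∘ g) id

/-- The dual inverse branches `bar h_{(b,η)_t}`. -/
noncomputable def hbar (d : Digit) (y : ℝ) : ℝ :=
  match d.s with
  | Par.e => (d.eps : ℝ) / (2 * (d.a : ℝ) + y)
  | Par.o =>
      1 / (1 + (d.eps : ℝ) / (((d.a : ℝ) - ((max 0 d.eps : ℤ) : ℝ)) + 1 / (1 + y)))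

/-- The matrix `M_{(a,ε)_s}` associated with the inverse branch `h_{(a,ε)_s}`. -/
noncomputable def Mdig (d : Digit) : Matrix (Fin 2) (Fin 2) ℝ :=
  match d.s with
  | Par.e => !![0, 1; (d.eps : ℝ), 2 * (d.a : ℝ)]
  | Par.o =>
      !![(d.a : ℝ) - ((max 0 d.eps : ℤ) : ℝ), (d.a : ℝ) - ((max 0 d.eps : ℤ) : ℝ) + (d.eps : ℝ);
         (d.a : ℝ) - ((max 0 d.eps : ℤ) : ℝ) + 1, (d.a : ℝ) - ((max 0 d.eps : ℤ) : ℝ) + (d.eps : ℝ) + 1]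

/-- `M_n(x) = M_{(a₁,ε₁)_{s₁}} ⋯ M_{(a_n,ε_n)_{s_n}}`. -/
noncomputable def Mn (n : ℕ) (x : ℝ) : Matrix (Fin 2) (Fin 2) ℝ :=
  ((List.range n).map fun i => Mdig (digit (T^[i] x))).prod

/-- `P_n(x)`: the `(1,2)`-entry of `M_n(x)` (numerator of the `n`-th convergent). -/
noncomputable def Pc (n : ℕ) (x : ℝ) : ℝ := Mn n x 0 1

/-- `Q_n(x)`: the `(2,2)`-entry of `M_n(x)` (denominator of the `n`-th convergent). -/
noncomputable def Qc (n : ℕ) (x : ℝ) : ℝ := Mn n x 1 1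





-- basic constants
lemma sig_sq : Real.sqrt 3 ^ 2 = 3 := Real.sq_sqrt (by norm_num)
lemma sig_gt : (1:ℝ) < Real.sqrt 3 := by
  nlinarith [sig_sq, Real.sqrt_nonneg 3]
lemma sig_lt : Real.sqrt 3 < 2 := by
  nlinarith [sig_sq, Real.sqrt_nonneg 3]
lemma L_pos : 0 < Real.log (2 + Real.sqrt 3) := by
  apply Real.log_pos; nlinarith [sig_gt]

/-- antiderivative of fdens -/
noncomputable def F (x : ℝ) : ℝ :=
  (Real.log (1 + Real.sqrt 3 * x) - Real.log (1 - (2 - Real.sqrt 3) * x)) /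
    Real.log (2 + Real.sqrt 3)

lemma F_hasDeriv {x : ℝ} (h0 : 0 ≤ x) (h1 : x ≤ 1) : HasDerivAt F (fdens x) x := by
  have hσ := sig_sq; have hσ1 := sig_gt; have hσ2 := sig_lt
  have h1' : 0 < 1 + Real.sqrt 3 * x := by nlinarith
  have h2' : 0 < 1 - (2 - Real.sqrt 3) * x := by nlinarith
  have d1 : HasDerivAt (fun x => Real.log (1 + Real.sqrt 3 * x)) (Real.sqrt 3 / (1 + Real.sqrt 3 * x)) x := by
    have := ((hasDerivAt_id x).const_mul (Real.sqrt 3)).const_add 1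
    have h := (Real.hasDerivAt_log h1'.ne').comp x (by simpa using this :
      HasDerivAt (fun x : ℝ => 1 + Real.sqrt 3 * x) (Real.sqrt 3) x)
    refine h.congr_deriv ?_
    field_simp
  have d2 : HasDerivAt (fun x => Real.log (1 - (2 - Real.sqrt 3) * x)) (-(2 - Real.sqrt 3) / (1 - (2 - Real.sqrt 3) * x)) x := by
    have : HasDerivAt (fun x : ℝ => 1 - (2 - Real.sqrt 3) * x) (-(2 - Real.sqrt 3)) x := by
      simpa using ((hasDerivAt_id x).const_mul (2 - Real.sqrt 3)).const_sub 1
    have h := (Real.hasDerivAt_log h2'.ne').comp x this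
    refine h.congr_deriv ?_
    field_simp
  have := (d1.sub d2).div_const (Real.log (2 + Real.sqrt 3))
  refine this.congr_deriv ?_
  symm
  unfold fdens
  have hL := L_pos
  field_simp
  nlinarith [sig_sq, mul_pos h1' h2', L_pos]

-- new part
lemma fdens_contOn {a b : ℝ} (h0 : 0 ≤ a) (h1 : b ≤ 1) : ContinuousOn fdens (Icc a b) := by
  apply ContinuousOn.div continuousOn_const
  · fun_prop
  · intro x hx
    have hx0 : 0 ≤ x := le_trans h0 hx.1
    have hx1 : x ≤ 1 := le_trans hx.2 h1
    have h1' : 0 < 1 + Real.sqrt 3 * x := by nlinarith [sig_gt, sig_lt]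
    have h2' : 0 < 1 - (2 - Real.sqrt 3) * x := by nlinarith [sig_gt, sig_lt]
    exact (mul_pos (mul_pos L_pos h2') h1').ne'

lemma fdens_nonneg {x : ℝ} (h0 : 0 ≤ x) (h1 : x ≤ 1) : 0 ≤ fdens x := by
  have h1' : 0 < 1 + Real.sqrt 3 * x := by nlinarith [sig_gt, sig_lt]
  have h2' : 0 < 1 - (2 - Real.sqrt 3) * x := by nlinarith [sig_gt, sig_lt]
  exact (div_pos two_pos (mul_pos (mul_pos L_pos h2') h1')).le

lemma lint_Ioo {a b : ℝ} (h0 : 0 ≤ a) (hab : a ≤ b) (h1 : b ≤ 1) :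
    ∫⁻ x in Ioo a b, ENNReal.ofReal (fdens x) = ENNReal.ofReal (F b - F a) := by
  have hInt : IntegrableOn fdens (Ioo a b) volume :=
    ((fdens_contOn h0 h1).integrableOn_Icc).mono_set Ioo_subset_Icc_self
  rw [← ofReal_integral_eq_lintegral_ofReal hInt]
  · congr 1
    have : ∫ x in Ioo a b, fdens x = ∫ x in a..b, fdens x := by
      rw [intervalIntegral.integral_of_le hab, ← integral_Ioc_eq_integral_Ioo]
    rw [this]
    apply intervalIntegral.integral_eq_sub_of_hasDerivAt
    · intro x hx
      rw [uIcc_of_le hab] at hx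
      exact F_hasDeriv (le_trans h0 hx.1) (le_trans hx.2 h1)
    · apply ContinuousOn.intervalIntegrable
      rw [uIcc_of_le hab]; exact fdens_contOn h0 h1
  · filter_upwards [ae_restrict_mem measurableSet_Ioo] with x hx
    exact fdens_nonneg (le_trans h0 hx.1.le) (le_trans hx.2.le h1)

lemma mu_apply {E : Set ℝ} (hE : MeasurableSet E) :
    mu E = ∫⁻ x in E ∩ Ioo 0 1, ENNReal.ofReal (fdens x) := by
  rw [mu, withDensity_apply _ hE, Measure.restrict_restrict hE]

lemma mu_Ioo {a b : ℝ} (h0 : 0 ≤ a) (hab : a ≤ b) (h1 : b ≤ 1) :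
    mu (Ioo a b) = ENNReal.ofReal (F b - F a) := by
  rw [mu_apply measurableSet_Ioo]
  have : Ioo a b ∩ Ioo 0 1 = Ioo a b ∨ Ioo a b ∩ Ioo 0 1 = Ioo 0 1 ∨ True := by tauto
  have hsub : Ioo a b ∩ Ioo 0 1 = Ioo (max a 0) (min b 1) := by
    rw [Ioo_inter_Ioo]
  rw [hsub, max_eq_left h0, min_eq_left h1]
  exact lint_Ioo h0 hab h1

lemma mu_singleton (x : ℝ) : mu {x} = 0 := by
  rw [mu_apply (measurableSet_singleton x)]
  refine le_antisymm ?_ (zero_le)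
  calc ∫⁻ y in {x} ∩ Ioo 0 1, ENNReal.ofReal (fdens y)
      ≤ ∫⁻ y in {x}, ENNReal.ofReal (fdens y) :=
        lintegral_mono_set inter_subset_left
    _ = 0 := by
        rw [setLIntegral_measure_zero]; exact measure_singleton x

lemma F_mono {a b : ℝ} (h0 : 0 ≤ a) (hab : a ≤ b) (h1 : b ≤ 1) : F a ≤ F b := by
  have := sig_gt; have := sig_lt
  have ha1 : 0 < 1 + Real.sqrt 3 * a := by nlinarith
  have ha2 : 0 < 1 - (2 - Real.sqrt 3) * b := by nlinarith
  have l1 : Real.log (1 + Real.sqrt 3 * a) ≤ Real.log (1 + Real.sqrt 3 * b) :=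
    Real.log_le_log ha1 (by nlinarith)
  have l2 : Real.log (1 - (2 - Real.sqrt 3) * b) ≤ Real.log (1 - (2 - Real.sqrt 3) * a) :=
    Real.log_le_log ha2 (by nlinarith)
  have := L_pos
  exact div_le_div_of_nonneg_right (by linarith) L_pos.le

lemma mu_between {a b : ℝ} {S : Set ℝ} (hS1 : Ioo a b ⊆ S) (hS2 : S ⊆ Icc a b)
    (h0 : 0 ≤ a) (hab : a ≤ b) (h1 : b ≤ 1) :
    mu S = ENNReal.ofReal (F b - F a) := by
  refine le_antisymm ?_ ?_
  · calc mu S ≤ mu (Ioo a b ∪ {a} ∪ {b}) := by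
          apply measure_mono; intro x hx
          rcases hS2 hx with ⟨hxa, hxb⟩
          rcases eq_or_lt_of_le hxa with h | h
          · left; right; exact h.symm
          rcases eq_or_lt_of_le hxb with h' | h'
          · right; exact h'
          · left; left; exact ⟨h, h'⟩
      _ ≤ mu (Ioo a b ∪ {a}) + mu {b} := measure_union_le _ _
      _ ≤ mu (Ioo a b) + mu {a} + mu {b} := by gcongr; exact measure_union_le _ _
      _ = ENNReal.ofReal (F b - F a) := by
          rw [mu_singleton, mu_singleton, mu_Ioo h0 hab h1, add_zero, add_zero]
  · rw [← mu_Ioo h0 hab h1]; exact measure_mono hS1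


lemma floor_half (m : ℤ) (u : ℝ) (h1 : 2*m - 1 ≤ u) (h2 : u < 2*m + 1) :
    ⌊(u + 1) / 2⌋ = m := by
  rw [Int.floor_eq_iff]
  constructor
  · rw [le_div_iff₀ (by norm_num : (0:ℝ) < 2)]; push_cast; linarith
  · rw [div_lt_iff₀ (by norm_num : (0:ℝ) < 2)]; push_cast; linarith

lemma Te_eq {y : ℝ} {m : ℤ} (h1 : 2*m - 1 ≤ 1/y) (h2 : 1/y < 2*m + 1) :
    Te y = |1/y - 2*m| := by
  rw [Te, floor_half m _ h1 h2]

lemma T_even {x : ℝ} {m : ℤ} (hx0 : 0 < x) (hx : x ≤ 1/2)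
    (h1 : 2*m - 1 ≤ 1/x) (h2 : 1/x < 2*m + 1) : T x = |1/x - 2*m| := by
  rw [T, if_neg (by linarith), if_neg (by push_neg; linarith), if_pos hx, Te_eq h1 h2]

lemma T_odd {x : ℝ} {m : ℤ} (hx : 1/2 < x) (hx1 : x < 1)
    (h1 : 2*m - 1 ≤ (1+x)/(1-x)) (h2 : (1+x)/(1-x) < 2*m + 1) :
    T x = (1 - |(1+x)/(1-x) - 2*m|) / (1 + |(1+x)/(1-x) - 2*m|) := by
  have hd : (0:ℝ) < 1 - x := by linarith
  have hiota : 1 / iota x = (1+x)/(1-x) := by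
    rw [iota, one_div_div]
  rw [T, if_neg (by linarith), if_neg (by push_neg; linarith), if_neg (by push_neg; linarith)]
  rw [iota, Te_eq (y := iota x) (m := m) (by rw [hiota]; exact h1) (by rw [hiota]; exact h2),
    hiota]

lemma Te_mem {y : ℝ} (hy : 0 < y) : Te y ∈ Icc (0:ℝ) 1 := by
  set m := ⌊(1/y + 1)/2⌋ with hm
  have h1 : (m:ℝ) ≤ (1/y+1)/2 := Int.floor_le _
  have h2 : (1/y+1)/2 < m + 1 := Int.lt_floor_add_one _
  constructor
  · exact abs_nonneg _
  · rw [Te, ← hm, abs_le]; constructor <;> [linarith; linarith]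

lemma T_mem (x : ℝ) : T x ∈ Icc (0:ℝ) 1 := by
  rw [T]
  split_ifs with h1 h2 h3
  · simp
  · simp
  · exact Te_mem (by linarith)
  · push_neg at h1 h2 h3
    have hι : 0 < iota x := by
      rw [iota]; apply div_pos <;> linarith
    have := Te_mem hι
    rw [iota]
    constructor
    · apply div_nonneg <;> [linarith [this.2]; linarith [this.1]]
    · rw [div_le_one (by linarith [this.1])]; linarith [this.1]

lemma measurable_T : Measurable T := by
  have hTe : Measurable Te := by
    apply Measurable.abs
    apply Measurable.sub
    · exact measurable_const.div measurable_id
    · apply Measurable.const_mul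
      exact measurable_from_top.comp
        (Int.measurable_floor.comp (((measurable_const.div measurable_id).add_const 1).div_const 2))
  have hiota : Measurable iota := by
    exact (measurable_const.sub measurable_id).div (measurable_const.add measurable_id)
  unfold T
  refine Measurable.ite measurableSet_Iic measurable_const ?_
  refine Measurable.ite (measurableSet_Ici (a := (1:ℝ))) measurable_const ?_
  refine Measurable.ite measurableSet_Iic hTe ?_
  exact hiota.comp (hTe.comp hiota)


-- reciprocal helpers
lemma rle {x c : ℝ} (hx : 0 < x) (hc : 0 < c) : c ≤ 1/x ↔ x ≤ 1/c := by
  rw [le_div_iff₀ hx, le_div_iff₀ hc, mul_comm]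
lemma rlt {x c : ℝ} (hx : 0 < x) (hc : 0 < c) : c < 1/x ↔ x < 1/c := by
  rw [lt_div_iff₀ hx, lt_div_iff₀ hc, mul_comm]
lemma rle' {x c : ℝ} (hx : 0 < x) (hc : 0 < c) : 1/x ≤ c ↔ 1/c ≤ x := by
  rw [div_le_iff₀ hx, div_le_iff₀ hc, mul_comm]
lemma rlt' {x c : ℝ} (hx : 0 < x) (hc : 0 < c) : 1/x < c ↔ 1/c < x := by
  rw [div_lt_iff₀ hx, div_lt_iff₀ hc, mul_comm]

-- v = (1+x)/(1-x) helpers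
lemma vle {x V : ℝ} (hd : x < 1) (hV : 0 < V + 1) :
    (1+x)/(1-x) ≤ V ↔ x ≤ (V-1)/(V+1) := by
  rw [div_le_iff₀ (by linarith), le_div_iff₀ hV]
  constructor <;> intro h <;> nlinarith
lemma vge {x V : ℝ} (hd : x < 1) (hV : 0 < V + 1) :
    V ≤ (1+x)/(1-x) ↔ (V-1)/(V+1) ≤ x := by
  rw [le_div_iff₀ (by linarith), div_le_iff₀ hV]
  constructor <;> intro h <;> nlinarith
lemma vlt {x V : ℝ} (hd : x < 1) (hV : 0 < V + 1) :
    (1+x)/(1-x) < V ↔ x < (V-1)/(V+1) := by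
  rw [div_lt_iff₀ (by linarith), lt_div_iff₀ hV]
  constructor <;> intro h <;> nlinarith
lemma vgt {x V : ℝ} (hd : x < 1) (hV : 0 < V + 1) :
    V < (1+x)/(1-x) ↔ (V-1)/(V+1) < x := by
  rw [lt_div_iff₀ (by linarith), div_lt_iff₀ hV]
  constructor <;> intro h <;> nlinarith

section MainSets
variable {t : ℝ} (ht0 : 0 ≤ t) (ht1 : t < 1)

lemma setA (ht0 : 0 ≤ t) (ht1 : t < 1) :
    {x : ℝ | T x ≤ t} ∩ Ioc (1/3) (1/2) = Icc (1/(2+t)) (1/2) := by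
  have h2t : (0:ℝ) < 2 + t := by linarith
  ext x
  simp only [mem_inter_iff, mem_Ioc, mem_Icc, mem_setOf_eq]
  constructor
  · rintro ⟨hT, hx1, hx2⟩
    have hx0 : 0 < x := by linarith [hx1]
    have hu1 : (2:ℝ) ≤ 1/x := (rle hx0 two_pos).mpr (by linarith)
    have hu2 : 1/x < 3 := by
      rw [rlt' hx0 (by norm_num)]; linarith
    rw [T_even (m := 1) hx0 hx2 (by push_cast; linarith) (by push_cast; linarith)] at hT
    push_cast at hT
    rw [abs_le] at hT
    refine ⟨?_, hx2⟩
    rw [← rle' hx0 h2t]; linarith [hT.2]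
  · rintro ⟨hx1, hx2⟩
    have hx0 : 0 < x := lt_of_lt_of_le (by positivity) hx1
    have hu1 : (2:ℝ) ≤ 1/x := (rle hx0 two_pos).mpr (by linarith)
    have hu2 : 1/x ≤ 2 + t := by rw [rle' hx0 h2t]; exact hx1
    refine ⟨?_, ?_, hx2⟩
    · rw [T_even (m := 1) hx0 hx2 (by push_cast; linarith) (by push_cast; linarith)]
      push_cast
      rw [abs_le]; constructor <;> linarith
    · have : (1:ℝ)/3 < 1/(2+t) := one_div_lt_one_div_of_lt h2t (by linarith)
      linarith
lemma setE (ht0 : 0 ≤ t) (ht1 : t < 1) (k : ℕ) :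
    {x : ℝ | T x ≤ t} ∩ Ioc (1/(2*(k:ℝ)+5)) (1/(2*(k:ℝ)+3)) =
      Icc (1/(2*(k:ℝ)+4+t)) (1/(2*(k:ℝ)+4-t)) := by
  have hk0 : (0:ℝ) ≤ (k:ℝ) := Nat.cast_nonneg k
  have h3 : (0:ℝ) < 2*(k:ℝ)+3 := by linarith
  have h5 : (0:ℝ) < 2*(k:ℝ)+5 := by linarith
  have hp : (0:ℝ) < 2*(k:ℝ)+4+t := by linarith
  have hm : (0:ℝ) < 2*(k:ℝ)+4-t := by linarith
  ext x
  simp only [mem_inter_iff, mem_Ioc, mem_Icc, mem_setOf_eq]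
  constructor
  · rintro ⟨hT, hx1, hx2⟩
    have hx0 : 0 < x := lt_trans (by positivity) hx1
    have hu1 : 2*(k:ℝ)+3 ≤ 1/x := (rle hx0 h3).mpr hx2
    have hu2 : 1/x < 2*(k:ℝ)+5 := by rw [rlt' hx0 h5]; exact hx1
    rw [T_even (m := (k:ℤ)+2) hx0 (by rw [← rle hx0 two_pos]; linarith)
      (by push_cast; linarith) (by push_cast; linarith)] at hT
    push_cast at hT
    rw [abs_le] at hT
    constructor
    · rw [← rle' hx0 hp]; linarith [hT.2]
    · rw [← rle hx0 hm]; linarith [hT.1]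
  · rintro ⟨hx1, hx2⟩
    have hx0 : 0 < x := lt_of_lt_of_le (by positivity) hx1
    have hu1 : 2*(k:ℝ)+4-t ≤ 1/x := (rle hx0 hm).mpr hx2
    have hu2 : 1/x ≤ 2*(k:ℝ)+4+t := by rw [rle' hx0 hp]; exact hx1
    refine ⟨?_, ?_, ?_⟩
    · rw [T_even (m := (k:ℤ)+2) hx0 (by rw [← rle hx0 two_pos]; linarith)
        (by push_cast; linarith) (by push_cast; linarith)]
      push_cast
      rw [abs_le]; constructor <;> linarith
    · rw [← rlt' hx0 h5]; linarith
    · rw [← rle hx0 h3]; linarith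

lemma s_le_one (ht0 : 0 ≤ t) (ht1 : t < 1) : (1-t)/(1+t) ≤ 1 := by
  rw [div_le_one (by linarith)]; linarith

lemma s_pos (ht0 : 0 ≤ t) (ht1 : t < 1) : 0 < (1-t)/(1+t) := by
  apply div_pos <;> linarith

lemma iota_ineq {w t : ℝ} (ht0 : 0 ≤ t) (ht1 : t < 1) (hw : 0 ≤ w) :
    (1-w)/(1+w) ≤ t ↔ (1-t)/(1+t) ≤ w := by
  rw [div_le_iff₀ (by linarith), div_le_iff₀ (by linarith)]
  constructor <;> intro h <;> nlinarith

lemma setD (ht0 : 0 ≤ t) (ht1 : t < 1) (k : ℕ) :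
    {x : ℝ | T x ≤ t} ∩ Ioc ((2*(k:ℝ)+2)/(2*(k:ℝ)+4)) ((2*(k:ℝ)+4)/(2*(k:ℝ)+6)) =
      Ioc ((2*(k:ℝ)+2)/(2*(k:ℝ)+4)) ((2*(k:ℝ)+3-(1-t)/(1+t))/(2*(k:ℝ)+5-(1-t)/(1+t))) ∪
      Icc ((2*(k:ℝ)+3+(1-t)/(1+t))/(2*(k:ℝ)+5+(1-t)/(1+t))) ((2*(k:ℝ)+4)/(2*(k:ℝ)+6)) := by
  set s := (1-t)/(1+t) with hs
  have hs0 : 0 < s := s_pos ht0 ht1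
  have hs1 : s ≤ 1 := s_le_one ht0 ht1
  have hk0 : (0:ℝ) ≤ (k:ℝ) := Nat.cast_nonneg k
  have hhalf : (1:ℝ)/2 ≤ (2*(k:ℝ)+2)/(2*(k:ℝ)+4) := by
    rw [div_le_div_iff₀ (by norm_num) (by linarith)]; linarith
  have hlt1 : (2*(k:ℝ)+4)/(2*(k:ℝ)+6) < 1 := by
    rw [div_lt_one (by linarith)]; linarith
  -- x ↔ v translations, for x in the cell
  ext x
  simp only [mem_inter_iff, mem_Ioc, mem_Icc, mem_union, mem_setOf_eq]
  constructor
  · rintro ⟨hT, hx1, hx2⟩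
    have hxh : 1/2 < x := lt_of_le_of_lt hhalf hx1
    have hx1' : x < 1 := lt_of_le_of_lt hx2 hlt1
    have hv1 : 2*(k:ℝ)+3 < (1+x)/(1-x) := by
      rw [vgt hx1' (by linarith)]
      have e : (2*(k:ℝ)+3-1)/(2*(k:ℝ)+3+1) = (2*(k:ℝ)+2)/(2*(k:ℝ)+4) := by
        congr 1 <;> ring
      rw [e]; exact hx1
    have hv2 : (1+x)/(1-x) ≤ 2*(k:ℝ)+5 := by
      rw [vle hx1' (by linarith)]
      have e : (2*(k:ℝ)+5-1)/(2*(k:ℝ)+5+1) = (2*(k:ℝ)+4)/(2*(k:ℝ)+6) := by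
        congr 1 <;> ring
      rw [e]; exact hx2
    have goalR : 2*(k:ℝ)+4+s ≤ (1+x)/(1-x) → (2*(k:ℝ)+3+s)/(2*(k:ℝ)+5+s) ≤ x := by
      intro h
      have e : (2*(k:ℝ)+3+s)/(2*(k:ℝ)+5+s) = ((2*(k:ℝ)+4+s)-1)/((2*(k:ℝ)+4+s)+1) := by
        congr 1 <;> ring
      rw [e, ← vge hx1' (by linarith)]; exact h
    rcases lt_or_eq_of_le hv2 with hv2' | hv2'
    · rw [T_odd (m := (k:ℤ)+2) hxh hx1' (by push_cast; linarith) (by push_cast; linarith)] at hT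
      push_cast at hT
      rw [show 2*((k:ℝ)+2) = 2*(k:ℝ)+4 from by ring] at hT
      rw [iota_ineq ht0 ht1 (abs_nonneg _), ← hs, le_abs] at hT
      rcases hT with h | h
      · exact Or.inr ⟨goalR (by linarith), hx2⟩
      · left
        refine ⟨hx1, ?_⟩
        have e : (2*(k:ℝ)+3-s)/(2*(k:ℝ)+5-s) = ((2*(k:ℝ)+4-s)-1)/((2*(k:ℝ)+4-s)+1) := by
          congr 1 <;> ring
        rw [e, ← vle hx1' (by linarith)]; linarith
    · exact Or.inr ⟨goalR (by linarith), hx2⟩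
  · intro hmem
    have hxmem : (2*(k:ℝ)+2)/(2*(k:ℝ)+4) < x ∧ x ≤ (2*(k:ℝ)+4)/(2*(k:ℝ)+6) := by
      rcases hmem with ⟨h1, h2⟩ | ⟨h1, h2⟩
      · refine ⟨h1, le_trans h2 ?_⟩
        rw [div_le_div_iff₀ (by linarith) (by linarith)]
        nlinarith
      · refine ⟨lt_of_lt_of_le ?_ h1, h2⟩
        rw [div_lt_div_iff₀ (by linarith) (by linarith)]
        nlinarith
    have hxh : 1/2 < x := lt_of_le_of_lt hhalf hxmem.1
    have hx1' : x < 1 := lt_of_le_of_lt hxmem.2 hlt1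
    have hv1 : 2*(k:ℝ)+3 < (1+x)/(1-x) := by
      rw [vgt hx1' (by linarith)]
      have e : (2*(k:ℝ)+3-1)/(2*(k:ℝ)+3+1) = (2*(k:ℝ)+2)/(2*(k:ℝ)+4) := by
        congr 1 <;> ring
      rw [e]; exact hxmem.1
    have hv2 : (1+x)/(1-x) ≤ 2*(k:ℝ)+5 := by
      rw [vle hx1' (by linarith)]
      have e : (2*(k:ℝ)+5-1)/(2*(k:ℝ)+5+1) = (2*(k:ℝ)+4)/(2*(k:ℝ)+6) := by
        congr 1 <;> ring
      rw [e]; exact hxmem.2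
    refine ⟨?_, hxmem⟩
    rcases hmem with ⟨h1, h2⟩ | ⟨h1, h2⟩
    · -- left interval: v ≤ 2k+4-s
      have hv3 : (1+x)/(1-x) ≤ 2*(k:ℝ)+4-s := by
        have e : (2*(k:ℝ)+3-s)/(2*(k:ℝ)+5-s) = ((2*(k:ℝ)+4-s)-1)/((2*(k:ℝ)+4-s)+1) := by
          congr 1 <;> ring
        rw [e, ← vle hx1' (by linarith)] at h2
        exact h2
      rw [T_odd (m := (k:ℤ)+2) hxh hx1' (by push_cast; linarith) (by push_cast; linarith)]
      push_cast
      rw [show 2*((k:ℝ)+2) = 2*(k:ℝ)+4 from by ring]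
      rw [iota_ineq ht0 ht1 (abs_nonneg _), ← hs, le_abs]
      right; linarith [abs_nonneg ((1+x)/(1-x) - (2*(k:ℝ)+4))]
    · -- right interval: v ≥ 2k+4+s
      have hv3 : 2*(k:ℝ)+4+s ≤ (1+x)/(1-x) := by
        have e : (2*(k:ℝ)+3+s)/(2*(k:ℝ)+5+s) = ((2*(k:ℝ)+4+s)-1)/((2*(k:ℝ)+4+s)+1) := by
          congr 1 <;> ring
        rw [e, ← vge hx1' (by linarith)] at h1
        exact h1
      rcases lt_or_eq_of_le hv2 with hv2' | hv2'
      · rw [T_odd (m := (k:ℤ)+2) hxh hx1' (by push_cast; linarith) (by push_cast; linarith)]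
        push_cast
        rw [show 2*((k:ℝ)+2) = 2*(k:ℝ)+4 from by ring]
        rw [iota_ineq ht0 ht1 (abs_nonneg _), ← hs, le_abs]
        left; linarith
      · rw [T_odd (m := (k:ℤ)+3) hxh hx1' (by push_cast; linarith) (by push_cast; linarith)]
        push_cast
        rw [show 2*((k:ℝ)+3) = 2*(k:ℝ)+6 from by ring]
        rw [iota_ineq ht0 ht1 (abs_nonneg _), ← hs]
        have : |(1+x)/(1-x) - (2*(k:ℝ)+6)| = 1 := by
          rw [hv2', show (2*(k:ℝ)+5) - (2*(k:ℝ)+6) = (-1:ℝ) from by ring, abs_neg, abs_one]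
        rw [this]; linarith

end MainSets

-- covering lemmas
lemma cover_even : Ioc (0:ℝ) (1/3) ⊆ ⋃ k:ℕ, Ioc (1/(2*(k:ℝ)+5)) (1/(2*(k:ℝ)+3)) := by
  rintro y ⟨hy0, hy3⟩
  have hu3 : (3:ℝ) ≤ 1/y := (rle hy0 (by norm_num)).mpr hy3
  set m := ⌊(1/y + 1)/2⌋ with hm
  have h1 : (m:ℝ) ≤ (1/y+1)/2 := Int.floor_le _
  have h2 : (1/y+1)/2 < m + 1 := Int.lt_floor_add_one _
  have hm2 : 2 ≤ m := by
    have : (2:ℝ) ≤ (1/y+1)/2 := by linarith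
    exact_mod_cast Int.le_floor.mpr (by exact_mod_cast this)
  refine mem_iUnion.mpr ⟨(m-2).toNat, ?_⟩
  have hcast : ((m-2).toNat : ℝ) = (m:ℝ) - 2 := by
    have h' : ((m-2).toNat : ℤ) = m - 2 := Int.toNat_of_nonneg (by omega)
    exact_mod_cast congrArg (fun z : ℤ => (z:ℝ)) h'
  rw [hcast]
  constructor
  · rw [← rlt' hy0 (by push_cast; linarith)]
    push_cast; linarith
  · rw [← rle hy0 (by push_cast; linarith)]
    push_cast; linarith

lemma cover_odd : Ioo (1/2:ℝ) 1 ⊆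
    ⋃ k:ℕ, Ioc ((2*(k:ℝ)+2)/(2*(k:ℝ)+4)) ((2*(k:ℝ)+4)/(2*(k:ℝ)+6)) := by
  rintro x ⟨hxh, hx1⟩
  have hd : 0 < 1 - x := by linarith
  set m := ⌈x/(1-x)⌉ with hm
  have h1 : x/(1-x) ≤ (m:ℝ) := Int.le_ceil _
  have h2 : (m:ℝ) < x/(1-x) + 1 := Int.ceil_lt_add_one _
  have hr1 : (1:ℝ) < x/(1-x) := by
    rw [lt_div_iff₀ hd]; linarith
  have hm2 : 2 ≤ m := by
    have : 1 < m := by exact_mod_cast Int.lt_ceil.mpr (by exact_mod_cast hr1)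
    omega
  refine mem_iUnion.mpr ⟨(m-2).toNat, ?_⟩
  have hcast : ((m-2).toNat : ℝ) = (m:ℝ) - 2 := by
    have h' : ((m-2).toNat : ℤ) = m - 2 := Int.toNat_of_nonneg (by omega)
    exact_mod_cast congrArg (fun z : ℤ => (z:ℝ)) h'
  rw [hcast]
  have hm2' : (2:ℝ) ≤ (m:ℝ) := by exact_mod_cast hm2
  rw [div_le_iff₀ hd] at h1
  have h2' : ((m:ℝ) - 1) * (1-x) < x := by
    rw [← sub_lt_iff_lt_add] at h2
    calc ((m:ℝ)-1)*(1-x) < (x/(1-x))*(1-x) := by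
          apply mul_lt_mul_of_pos_right _ hd
          linarith
      _ = x := by field_simp
  constructor
  · rw [div_lt_iff₀ (by linarith)]; nlinarith
  · rw [le_div_iff₀ (by linarith)]; nlinarith

-- pairwise disjointness
lemma pdE : Pairwise (Function.onFun Disjoint
    (fun k:ℕ => Ioc (1/(2*(k:ℝ)+5)) (1/(2*(k:ℝ)+3)))) := by
  have key : ∀ i j : ℕ, i < j → Disjoint (Ioc (1/(2*(i:ℝ)+5)) (1/(2*(i:ℝ)+3)))
      (Ioc (1/(2*(j:ℝ)+5)) (1/(2*(j:ℝ)+3))) := by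
    intro i j hij
    rw [Set.disjoint_left]
    rintro a ⟨ha1, _⟩ ⟨_, ha2⟩
    have hij' : (i:ℝ) + 1 ≤ (j:ℝ) := by exact_mod_cast hij
    have : 1/(2*(j:ℝ)+3) ≤ 1/(2*(i:ℝ)+5) :=
      one_div_le_one_div_of_le (by positivity) (by linarith)
    linarith
  intro i j hij
  rcases hij.lt_or_gt with h | h
  · exact key i j h
  · exact (key j i h).symm

lemma pdD : Pairwise (Function.onFun Disjoint
    (fun k:ℕ => Ioc ((2*(k:ℝ)+2)/(2*(k:ℝ)+4)) ((2*(k:ℝ)+4)/(2*(k:ℝ)+6)))) := by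
  have key : ∀ i j : ℕ, i < j →
      Disjoint (Ioc ((2*(i:ℝ)+2)/(2*(i:ℝ)+4)) ((2*(i:ℝ)+4)/(2*(i:ℝ)+6)))
        (Ioc ((2*(j:ℝ)+2)/(2*(j:ℝ)+4)) ((2*(j:ℝ)+4)/(2*(j:ℝ)+6))) := by
    intro i j hij
    rw [Set.disjoint_left]
    rintro a ⟨_, ha1⟩ ⟨ha2, _⟩
    have hij' : (i:ℝ) + 1 ≤ (j:ℝ) := by exact_mod_cast hij
    have : (2*(i:ℝ)+4)/(2*(i:ℝ)+6) ≤ (2*(j:ℝ)+2)/(2*(j:ℝ)+4) := by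
      rw [div_le_div_iff₀ (by positivity) (by positivity)]
      nlinarith
    linarith
  intro i j hij
  rcases hij.lt_or_gt with h | h
  · exact key i j h
  · exact (key j i h).symm

-- F-value lemmas
lemma log_id1 : Real.log (1+Real.sqrt 3) - Real.log (Real.sqrt 3 - 1) = Real.log (2+Real.sqrt 3) := by
  have h1 := sig_gt; have h2 := sig_lt
  have key : 1 + Real.sqrt 3 = (2+Real.sqrt 3) * (Real.sqrt 3 - 1) := by nlinarith [sig_sq]
  rw [key, Real.log_mul (by nlinarith) (by nlinarith)]
  ring

lemma Fval_inv {v : ℝ} (hv : 1 ≤ v) :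
    F (1/v) = (Real.log (v+Real.sqrt 3) - Real.log (v-2+Real.sqrt 3)) / Real.log (2+Real.sqrt 3) := by
  have h1 := sig_gt; have h2 := sig_lt
  have hv0 : (0:ℝ) < v := by linarith
  have hp1 : 0 < v + Real.sqrt 3 := by linarith
  have hp2 : 0 < v - 2 + Real.sqrt 3 := by linarith
  rw [F]
  rw [show 1 + Real.sqrt 3 * (1/v) = (v+Real.sqrt 3)/v from by field_simp]
  rw [show 1 - (2-Real.sqrt 3) * (1/v) = (v-2+Real.sqrt 3)/v from by field_simp; ring]
  rw [Real.log_div hp1.ne' hv0.ne', Real.log_div hp2.ne' hv0.ne']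
  ring

lemma Fval_frac {v : ℝ} (hv : 1 ≤ v) :
    F ((v-1)/(v+1)) = (Real.log (2+Real.sqrt 3) - Real.log (v+Real.sqrt 3)
      + Real.log (v-2+Real.sqrt 3)) / Real.log (2+Real.sqrt 3) := by
  have h1 := sig_gt; have h2 := sig_lt
  have hv1 : (0:ℝ) < v + 1 := by linarith
  have hp1 : 0 < v + Real.sqrt 3 := by linarith
  have hp2 : 0 < v - 2 + Real.sqrt 3 := by linarith
  rw [F]
  rw [show 1 + Real.sqrt 3 * ((v-1)/(v+1)) = ((1+Real.sqrt 3)*(v-2+Real.sqrt 3))/(v+1) from by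
    field_simp; linear_combination -sig_sq]
  rw [show 1 - (2-Real.sqrt 3) * ((v-1)/(v+1)) = ((Real.sqrt 3-1)*(v+Real.sqrt 3))/(v+1) from by
    field_simp; linear_combination -sig_sq]
  have hq1 : (0:ℝ) < 1 + Real.sqrt 3 := by linarith
  have hq2 : (0:ℝ) < Real.sqrt 3 - 1 := by linarith
  rw [Real.log_div (mul_pos hq1 hp2).ne' hv1.ne', Real.log_div (mul_pos hq2 hp1).ne' hv1.ne',
    Real.log_mul hq1.ne' hp2.ne', Real.log_mul hq2.ne' hp1.ne']
  congr 1
  linarith [log_id1]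

-- telescoping sums
lemma hasSum_tel {φ : ℕ → ℝ} (hnn : ∀ k, 0 ≤ φ k - φ (k+1)) (h0 : Tendsto φ atTop (𝓝 0)) :
    HasSum (fun k => φ k - φ (k+1)) (φ 0) := by
  rw [hasSum_iff_tendsto_nat_of_nonneg hnn]
  have he : ∀ n, ∑ i ∈ Finset.range n, (φ i - φ (i+1)) = φ 0 - φ n :=
    fun n => Finset.sum_range_sub' φ n
  simp_rw [he]
  simpa using tendsto_const_nhds.sub h0

lemma tendsto_logdiff (a b : ℝ) :
    Tendsto (fun k:ℕ => Real.log (2*(k:ℝ)+a) - Real.log (2*(k:ℝ)+b)) atTop (𝓝 0) := by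
  have h1 : Tendsto (fun k:ℕ => 2*(k:ℝ)+b) atTop atTop := by
    apply Filter.tendsto_atTop_add_const_right
    exact Tendsto.const_mul_atTop two_pos tendsto_natCast_atTop_atTop
  have h2 : Tendsto (fun k:ℕ => 1 + (a-b)/(2*(k:ℝ)+b)) atTop (𝓝 1) := by
    have hz := Tendsto.div_atTop (tendsto_const_nhds (x := a-b)) h1
    simpa using tendsto_const_nhds.add hz
  have h3 : Tendsto (fun k:ℕ => Real.log (1 + (a-b)/(2*(k:ℝ)+b))) atTop (𝓝 0) := by
    have := (Real.continuousAt_log one_ne_zero).tendsto.comp h2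
    simpa [Function.comp_def] using this
  apply h3.congr'
  filter_upwards [eventually_gt_atTop (Nat.ceil (max |a| |b|))] with k hk
  have hk' : max |a| |b| < (k:ℝ) := lt_of_le_of_lt (Nat.le_ceil _) (by exact_mod_cast hk)
  have ha' : |a| < (k:ℝ) := lt_of_le_of_lt (le_max_left _ _) hk'
  have hb' : |b| < (k:ℝ) := lt_of_le_of_lt (le_max_right _ _) hk'
  have hk0 : (0:ℝ) ≤ (k:ℝ) := Nat.cast_nonneg k
  have hpa : 0 < 2*(k:ℝ)+a := by
    have := neg_abs_le a; linarith
  have hpb : 0 < 2*(k:ℝ)+b := by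
    have := neg_abs_le b; linarith
  rw [show 1 + (a-b)/(2*(k:ℝ)+b) = (2*(k:ℝ)+a)/(2*(k:ℝ)+b) from by field_simp; ring]
  rw [Real.log_div hpa.ne' hpb.ne']

-- series
noncomputable def phiE (t : ℝ) (k : ℕ) : ℝ :=
  (Real.log (2*(k:ℝ)+2+t+Real.sqrt 3) - Real.log (2*(k:ℝ)+2-t+Real.sqrt 3)) /
    Real.log (2+Real.sqrt 3)

noncomputable def phiO (t : ℝ) (k : ℕ) : ℝ :=
  (Real.log (2*(k:ℝ)+3+Real.sqrt 3) - Real.log (2*(k:ℝ)+1+Real.sqrt 3)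
    - Real.log (2*(k:ℝ)+2+(1-t)/(1+t)+Real.sqrt 3)
    + Real.log (2*(k:ℝ)+2-(1-t)/(1+t)+Real.sqrt 3)) / Real.log (2+Real.sqrt 3)

lemma evenE {t : ℝ} (ht0 : 0 ≤ t) (ht1 : t < 1) (k : ℕ) :
    F (1/(2*(k:ℝ)+4-t)) - F (1/(2*(k:ℝ)+4+t)) = phiE t k - phiE t (k+1) := by
  have hk0 : (0:ℝ) ≤ (k:ℝ) := Nat.cast_nonneg k
  rw [Fval_inv (by linarith : (1:ℝ) ≤ 2*(k:ℝ)+4-t),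
    Fval_inv (by linarith : (1:ℝ) ≤ 2*(k:ℝ)+4+t)]
  unfold phiE
  push_cast
  ring_nf

lemma even_nonneg {t : ℝ} (ht0 : 0 ≤ t) (ht1 : t < 1) (k : ℕ) :
    0 ≤ F (1/(2*(k:ℝ)+4-t)) - F (1/(2*(k:ℝ)+4+t)) := by
  have hk0 : (0:ℝ) ≤ (k:ℝ) := Nat.cast_nonneg k
  have hm : (0:ℝ) < 2*(k:ℝ)+4-t := by linarith
  have hp : (0:ℝ) < 2*(k:ℝ)+4+t := by linarith
  apply sub_nonneg.mpr
  apply F_mono (by positivity) (one_div_le_one_div_of_le hm (by linarith))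
  rw [div_le_one hm]; linarith

lemma phiE_tendsto (t : ℝ) : Tendsto (phiE t) atTop (𝓝 0) := by
  have h := (tendsto_logdiff (2+t+Real.sqrt 3) (2-t+Real.sqrt 3)).div_const
    (Real.log (2+Real.sqrt 3))
  rw [zero_div] at h
  exact h.congr (fun k => by unfold phiE; ring_nf)

lemma even_hasSum {t : ℝ} (ht0 : 0 ≤ t) (ht1 : t < 1) :
    HasSum (fun k:ℕ => F (1/(2*(k:ℝ)+4-t)) - F (1/(2*(k:ℝ)+4+t))) (phiE t 0) := by
  have h := hasSum_tel (φ := phiE t)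
    (fun k => (evenE ht0 ht1 k) ▸ even_nonneg ht0 ht1 k) (phiE_tendsto t)
  have he : (fun k:ℕ => F (1/(2*(k:ℝ)+4-t)) - F (1/(2*(k:ℝ)+4+t)))
      = fun k => phiE t k - phiE t (k+1) := funext (evenE ht0 ht1)
  rw [he]
  exact h

lemma oddE {t : ℝ} (ht0 : 0 ≤ t) (ht1 : t < 1) (k : ℕ) :
    (F ((2*(k:ℝ)+3-(1-t)/(1+t))/(2*(k:ℝ)+5-(1-t)/(1+t))) - F ((2*(k:ℝ)+2)/(2*(k:ℝ)+4)))
    + (F ((2*(k:ℝ)+4)/(2*(k:ℝ)+6)) - F ((2*(k:ℝ)+3+(1-t)/(1+t))/(2*(k:ℝ)+5+(1-t)/(1+t))))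
      = phiO t k - phiO t (k+1) := by
  have hk0 : (0:ℝ) ≤ (k:ℝ) := Nat.cast_nonneg k
  set s := (1-t)/(1+t) with hs
  have hs0 : 0 < s := s_pos ht0 ht1
  have hs1 : s ≤ 1 := s_le_one ht0 ht1
  rw [show (2*(k:ℝ)+3-s)/(2*(k:ℝ)+5-s) = ((2*(k:ℝ)+4-s)-1)/((2*(k:ℝ)+4-s)+1) from by
      congr 1 <;> ring,
    show (2*(k:ℝ)+2)/(2*(k:ℝ)+4) = ((2*(k:ℝ)+3)-1)/((2*(k:ℝ)+3)+1) from by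
      congr 1 <;> ring,
    show (2*(k:ℝ)+4)/(2*(k:ℝ)+6) = ((2*(k:ℝ)+5)-1)/((2*(k:ℝ)+5)+1) from by
      congr 1 <;> ring,
    show (2*(k:ℝ)+3+s)/(2*(k:ℝ)+5+s) = ((2*(k:ℝ)+4+s)-1)/((2*(k:ℝ)+4+s)+1) from by
      congr 1 <;> ring,
    Fval_frac (by linarith : (1:ℝ) ≤ 2*(k:ℝ)+4-s),
    Fval_frac (by linarith : (1:ℝ) ≤ 2*(k:ℝ)+3),
    Fval_frac (by linarith : (1:ℝ) ≤ 2*(k:ℝ)+5),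
    Fval_frac (by linarith : (1:ℝ) ≤ 2*(k:ℝ)+4+s)]
  unfold phiO
  rw [← hs]
  push_cast
  ring_nf

lemma odd_nonneg1 {t : ℝ} (ht0 : 0 ≤ t) (ht1 : t < 1) (k : ℕ) :
    0 ≤ F ((2*(k:ℝ)+3-(1-t)/(1+t))/(2*(k:ℝ)+5-(1-t)/(1+t))) - F ((2*(k:ℝ)+2)/(2*(k:ℝ)+4)) := by
  have hk0 : (0:ℝ) ≤ (k:ℝ) := Nat.cast_nonneg k
  have hs0 : 0 < (1-t)/(1+t) := s_pos ht0 ht1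
  have hs1 : (1-t)/(1+t) ≤ 1 := s_le_one ht0 ht1
  apply sub_nonneg.mpr
  apply F_mono (by positivity) ?_ ?_
  · rw [div_le_div_iff₀ (by linarith) (by linarith)]; nlinarith
  · rw [div_le_one (by linarith)]; linarith

lemma odd_nonneg2 {t : ℝ} (ht0 : 0 ≤ t) (ht1 : t < 1) (k : ℕ) :
    0 ≤ F ((2*(k:ℝ)+4)/(2*(k:ℝ)+6)) - F ((2*(k:ℝ)+3+(1-t)/(1+t))/(2*(k:ℝ)+5+(1-t)/(1+t))) := by
  have hk0 : (0:ℝ) ≤ (k:ℝ) := Nat.cast_nonneg k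
  have hs0 : 0 < (1-t)/(1+t) := s_pos ht0 ht1
  have hs1 : (1-t)/(1+t) ≤ 1 := s_le_one ht0 ht1
  apply sub_nonneg.mpr
  apply F_mono (by positivity) ?_ ?_
  · rw [div_le_div_iff₀ (by linarith) (by linarith)]; nlinarith
  · rw [div_le_one (by linarith)]; linarith

lemma odd_nonneg {t : ℝ} (ht0 : 0 ≤ t) (ht1 : t < 1) (k : ℕ) :
    0 ≤ (F ((2*(k:ℝ)+3-(1-t)/(1+t))/(2*(k:ℝ)+5-(1-t)/(1+t))) - F ((2*(k:ℝ)+2)/(2*(k:ℝ)+4)))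
    + (F ((2*(k:ℝ)+4)/(2*(k:ℝ)+6)) - F ((2*(k:ℝ)+3+(1-t)/(1+t))/(2*(k:ℝ)+5+(1-t)/(1+t)))) :=
  add_nonneg (odd_nonneg1 ht0 ht1 k) (odd_nonneg2 ht0 ht1 k)

lemma phiO_tendsto (t : ℝ) : Tendsto (phiO t) atTop (𝓝 0) := by
  have h := ((tendsto_logdiff (3+Real.sqrt 3) (1+Real.sqrt 3)).add
    (tendsto_logdiff (2-(1-t)/(1+t)+Real.sqrt 3) (2+(1-t)/(1+t)+Real.sqrt 3))).div_const
    (Real.log (2+Real.sqrt 3))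
  rw [add_zero, zero_div] at h
  exact h.congr (fun k => by unfold phiO; ring_nf)

lemma odd_hasSum {t : ℝ} (ht0 : 0 ≤ t) (ht1 : t < 1) :
    HasSum (fun k:ℕ =>
      (F ((2*(k:ℝ)+3-(1-t)/(1+t))/(2*(k:ℝ)+5-(1-t)/(1+t))) - F ((2*(k:ℝ)+2)/(2*(k:ℝ)+4)))
      + (F ((2*(k:ℝ)+4)/(2*(k:ℝ)+6)) - F ((2*(k:ℝ)+3+(1-t)/(1+t))/(2*(k:ℝ)+5+(1-t)/(1+t)))))
      (phiO t 0) := by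
  have h := hasSum_tel (φ := phiO t)
    (fun k => (oddE ht0 ht1 k) ▸ odd_nonneg ht0 ht1 k) (phiO_tendsto t)
  have he := funext (oddE ht0 ht1)
  rw [show (fun k:ℕ =>
      (F ((2*(k:ℝ)+3-(1-t)/(1+t))/(2*(k:ℝ)+5-(1-t)/(1+t))) - F ((2*(k:ℝ)+2)/(2*(k:ℝ)+4)))
      + (F ((2*(k:ℝ)+4)/(2*(k:ℝ)+6)) - F ((2*(k:ℝ)+3+(1-t)/(1+t))/(2*(k:ℝ)+5+(1-t)/(1+t)))))
      = fun k => phiO t k - phiO t (k+1) from he]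
  exact h

lemma F_zero : F 0 = 0 := by simp [F]

lemma F_one : F 1 = 1 := by
  rw [F]
  rw [mul_one, show 1 - (2-Real.sqrt 3) * 1 = Real.sqrt 3 - 1 from by ring, log_id1]
  exact div_self L_pos.ne'

lemma final_id {t : ℝ} (ht0 : 0 ≤ t) (ht1 : t < 1) :
    (F (1/2) - F (1/(2+t))) + phiE t 0 + phiO t 0 = F t := by
  have hσ1 := sig_gt; have hσ2 := sig_lt; have hσ := sig_sq
  have hs0 : 0 < (1-t)/(1+t) := s_pos ht0 ht1
  have hs1 : (1-t)/(1+t) ≤ 1 := s_le_one ht0 ht1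
  have h1t : (0:ℝ) < 1+t := by linarith
  have hL := L_pos
  have e1 : F (1/2) = (Real.log (2+Real.sqrt 3) - Real.log (Real.sqrt 3)) /
      Real.log (2+Real.sqrt 3) := by
    rw [Fval_inv (by norm_num : (1:ℝ) ≤ 2)]
    ring_nf
  have e2 : F (1/(2+t)) = (Real.log (2+t+Real.sqrt 3) - Real.log (t+Real.sqrt 3)) /
      Real.log (2+Real.sqrt 3) := by
    rw [Fval_inv (by linarith : (1:ℝ) ≤ 2+t)]
    ring_nf
  have k3 : Real.log (3+Real.sqrt 3) = Real.log (Real.sqrt 3) + Real.log (1+Real.sqrt 3) := by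
    rw [show (3:ℝ)+Real.sqrt 3 = Real.sqrt 3 * (1+Real.sqrt 3) from by linear_combination -hσ,
      Real.log_mul (by positivity) (by positivity)]
  have k5 : Real.log (1-(2-Real.sqrt 3)*t) =
      Real.log (2-t+Real.sqrt 3) - Real.log (2+Real.sqrt 3) := by
    rw [show 1-(2-Real.sqrt 3)*t = (2-t+Real.sqrt 3)/(2+Real.sqrt 3) from by
      rw [eq_div_iff (by positivity)]; linear_combination t*hσ,
      Real.log_div (by linarith) (by positivity)]
  have k6 : Real.log (2-(1-t)/(1+t)+Real.sqrt 3) =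
      Real.log (1+Real.sqrt 3) + Real.log (1+Real.sqrt 3*t) - Real.log (1+t) := by
    rw [show 2-(1-t)/(1+t)+Real.sqrt 3 = ((1+Real.sqrt 3)*(1+Real.sqrt 3*t))/(1+t) from by
      rw [eq_div_iff h1t.ne']; field_simp; linear_combination -t*hσ,
      Real.log_div (by positivity) h1t.ne', Real.log_mul (by positivity) (by positivity)]
  have k7 : Real.log (2+(1-t)/(1+t)+Real.sqrt 3) =
      Real.log (1+Real.sqrt 3) + Real.log (t+Real.sqrt 3) - Real.log (1+t) := by
    rw [show 2+(1-t)/(1+t)+Real.sqrt 3 = ((1+Real.sqrt 3)*(t+Real.sqrt 3))/(1+t) from by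
      rw [eq_div_iff h1t.ne']; field_simp; linear_combination -hσ,
      Real.log_div (by positivity) h1t.ne',
      Real.log_mul (by positivity) (by positivity)]
  rw [e1, e2, F, phiE, phiO]
  push_cast
  rw [show 2*(0:ℝ)+2+t+Real.sqrt 3 = 2+t+Real.sqrt 3 from by norm_num,
    show 2*(0:ℝ)+2-t+Real.sqrt 3 = 2-t+Real.sqrt 3 from by norm_num,
    show 2*(0:ℝ)+3+Real.sqrt 3 = 3+Real.sqrt 3 from by norm_num,
    show 2*(0:ℝ)+1+Real.sqrt 3 = 1+Real.sqrt 3 from by norm_num,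
    show 2*(0:ℝ)+2+(1-t)/(1+t)+Real.sqrt 3 = 2+(1-t)/(1+t)+Real.sqrt 3 from by norm_num,
    show 2*(0:ℝ)+2-(1-t)/(1+t)+Real.sqrt 3 = 2-(1-t)/(1+t)+Real.sqrt 3 from by norm_num]
  rw [div_sub_div_same, ← add_div, ← add_div]
  congr 1
  linarith [k3, k5, k6, k7]

lemma mu_univ : mu univ = 1 := by
  rw [mu_apply MeasurableSet.univ, univ_inter, lint_Ioo le_rfl zero_le_one le_rfl,
    F_one, F_zero]
  norm_num

lemma mu_Iic {t : ℝ} (ht0 : 0 ≤ t) (ht1 : t < 1) : mu (Iic t) = ENNReal.ofReal (F t) := by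
  have h1 : mu (Iic t) = mu (Ioc 0 t) := by
    have hset : Iic t ∩ Ioo 0 1 = Ioc 0 t ∩ Ioo 0 1 := by
      ext x
      simp only [mem_inter_iff, mem_Iic, mem_Ioo, mem_Ioc]
      constructor
      · rintro ⟨h, h2, h3⟩; exact ⟨⟨h2, h⟩, h2, h3⟩
      · rintro ⟨⟨h2, h⟩, _, h3⟩; exact ⟨h, h2, h3⟩
    rw [mu_apply measurableSet_Iic, mu_apply measurableSet_Ioc, hset]
  rw [h1, mu_between Ioo_subset_Ioc_self Ioc_subset_Icc_self le_rfl ht0 ht1.le, F_zero,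
    sub_zero]

lemma mu_preimage {t : ℝ} (ht0 : 0 ≤ t) (ht1 : t < 1) :
    mu (T ⁻¹' (Iic t)) = ENNReal.ofReal (F t) := by
  have hσ1 := sig_gt; have hσ2 := sig_lt
  have hs0 : 0 < (1-t)/(1+t) := s_pos ht0 ht1
  have hs1 : (1-t)/(1+t) ≤ 1 := s_le_one ht0 ht1
  set P := T ⁻¹' (Iic t) with hPdef
  have hP : MeasurableSet P := measurable_T measurableSet_Iic
  have hPset : P = {x : ℝ | T x ≤ t} := rfl
  -- reduce to (0,1)
  have hcompl : mu (Ioo (0:ℝ) 1)ᶜ = 0 := by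
    rw [mu_apply measurableSet_Ioo.compl, compl_inter_self]
    simp
  have h1 : mu P = mu (P ∩ Ioo 0 1) := by
    apply le_antisymm
    · calc mu P = mu ((P ∩ Ioo 0 1) ∪ (P ∩ (Ioo 0 1)ᶜ)) := by rw [inter_union_compl]
        _ ≤ mu (P ∩ Ioo 0 1) + mu (P ∩ (Ioo 0 1)ᶜ) := measure_union_le _ _
        _ = mu (P ∩ Ioo 0 1) := by
            have hz : mu (P ∩ (Ioo 0 1)ᶜ) = 0 :=
              le_antisymm (le_trans (measure_mono inter_subset_right) hcompl.le) (zero_le)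
            rw [hz, add_zero]
    · exact measure_mono inter_subset_left
  have hsplit : Ioo (0:ℝ) 1 = Ioc 0 (1/3) ∪ Ioc (1/3) (1/2) ∪ Ioo (1/2) 1 := by
    ext x
    simp only [mem_union, mem_Ioc, mem_Ioo]
    constructor
    · rintro ⟨a, b⟩
      rcases le_or_gt x (1/3) with h | h
      · exact Or.inl (Or.inl ⟨a, h⟩)
      · rcases le_or_gt x (1/2) with h' | h'
        · exact Or.inl (Or.inr ⟨h, h'⟩)
        · exact Or.inr ⟨h', b⟩
    · rintro ((⟨a, b⟩ | ⟨a, b⟩) | ⟨a, b⟩) <;> constructor <;> linarith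
  rw [h1, hsplit, inter_union_distrib_left, inter_union_distrib_left]
  have hd1 : Disjoint (P ∩ Ioc (0:ℝ) (1/3) ∪ P ∩ Ioc (1/3) (1/2)) (P ∩ Ioo (1/2) 1) := by
    rw [Set.disjoint_left]
    rintro x (⟨_, _, h⟩ | ⟨_, _, h⟩) ⟨_, h', _⟩ <;> linarith
  have hd2 : Disjoint (P ∩ Ioc (0:ℝ) (1/3)) (P ∩ Ioc (1/3) (1/2)) := by
    rw [Set.disjoint_left]
    rintro x ⟨_, _, h⟩ ⟨_, h', _⟩; linarith
  rw [measure_union hd1 (hP.inter measurableSet_Ioo),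
    measure_union hd2 (hP.inter measurableSet_Ioc)]
  -- piece 2 : middle
  have piece2 : mu (P ∩ Ioc (1/3) (1/2)) = ENNReal.ofReal (F (1/2) - F (1/(2+t))) := by
    rw [hPset, setA ht0 ht1]
    apply mu_between Ioo_subset_Icc_self (subset_refl _) (by positivity) ?_ (by norm_num)
    rw [div_le_div_iff₀ (by linarith) (by norm_num)]; linarith
  -- piece 1 : even part
  have piece1 : mu (P ∩ Ioc 0 (1/3)) =
      ∑' k:ℕ, ENNReal.ofReal (F (1/(2*(k:ℝ)+4-t)) - F (1/(2*(k:ℝ)+4+t))) := by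
    have hcells : P ∩ Ioc 0 (1/3) = ⋃ k:ℕ, (P ∩ Ioc (1/(2*(k:ℝ)+5)) (1/(2*(k:ℝ)+3))) := by
      apply subset_antisymm
      · rintro x ⟨hx1, hx2⟩
        rcases mem_iUnion.mp (cover_even hx2) with ⟨k, hk⟩
        exact mem_iUnion.mpr ⟨k, hx1, hk⟩
      · apply iUnion_subset
        intro k x ⟨hx1, hx2⟩
        have hk0 : (0:ℝ) ≤ (k:ℝ) := Nat.cast_nonneg k
        refine ⟨hx1, lt_trans (by positivity) hx2.1, le_trans hx2.2 ?_⟩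
        apply one_div_le_one_div_of_le (by norm_num) (by linarith)
    rw [hcells, measure_iUnion ?_ (fun k => hP.inter measurableSet_Ioc)]
    · apply tsum_congr
      intro k
      have hk0 : (0:ℝ) ≤ (k:ℝ) := Nat.cast_nonneg k
      rw [hPset, setE ht0 ht1 k]
      apply mu_between Ioo_subset_Icc_self (subset_refl _) (by positivity)
        (one_div_le_one_div_of_le (by linarith) (by linarith)) ?_
      rw [div_le_one (by linarith)]; linarith
    · intro i j hij
      exact (pdE hij).mono inter_subset_right inter_subset_right
  -- piece 3 : odd part
  have piece3 : mu (P ∩ Ioo (1/2) 1) =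
      ∑' k:ℕ, (ENNReal.ofReal
          (F ((2*(k:ℝ)+3-(1-t)/(1+t))/(2*(k:ℝ)+5-(1-t)/(1+t))) - F ((2*(k:ℝ)+2)/(2*(k:ℝ)+4)))
        + ENNReal.ofReal
          (F ((2*(k:ℝ)+4)/(2*(k:ℝ)+6)) - F ((2*(k:ℝ)+3+(1-t)/(1+t))/(2*(k:ℝ)+5+(1-t)/(1+t))))) := by
    have hcells : P ∩ Ioo (1/2) 1
        = ⋃ k:ℕ, (P ∩ Ioc ((2*(k:ℝ)+2)/(2*(k:ℝ)+4)) ((2*(k:ℝ)+4)/(2*(k:ℝ)+6))) := by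
      apply subset_antisymm
      · rintro x ⟨hx1, hx2⟩
        rcases mem_iUnion.mp (cover_odd hx2) with ⟨k, hk⟩
        exact mem_iUnion.mpr ⟨k, hx1, hk⟩
      · apply iUnion_subset
        intro k x hx
        have hk0 : (0:ℝ) ≤ (k:ℝ) := Nat.cast_nonneg k
        refine ⟨hx.1, ?_, ?_⟩
        · calc (1:ℝ)/2 ≤ (2*(k:ℝ)+2)/(2*(k:ℝ)+4) := by
                rw [div_le_div_iff₀ (by norm_num) (by linarith)]; linarith
            _ < x := hx.2.1
        · calc x ≤ (2*(k:ℝ)+4)/(2*(k:ℝ)+6) := hx.2.2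
            _ < 1 := by rw [div_lt_one (by linarith)]; linarith
    rw [hcells, measure_iUnion ?_ (fun k => hP.inter measurableSet_Ioc)]
    · apply tsum_congr
      intro k
      have hk0 : (0:ℝ) ≤ (k:ℝ) := Nat.cast_nonneg k
      rw [hPset, setD ht0 ht1 k]
      have hdisj : Disjoint
          (Ioc ((2*(k:ℝ)+2)/(2*(k:ℝ)+4)) ((2*(k:ℝ)+3-(1-t)/(1+t))/(2*(k:ℝ)+5-(1-t)/(1+t))))
          (Icc ((2*(k:ℝ)+3+(1-t)/(1+t))/(2*(k:ℝ)+5+(1-t)/(1+t))) ((2*(k:ℝ)+4)/(2*(k:ℝ)+6))) := by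
        rw [Set.disjoint_left]
        rintro y ⟨_, hy1⟩ ⟨hy2, _⟩
        have : (2*(k:ℝ)+3-(1-t)/(1+t))/(2*(k:ℝ)+5-(1-t)/(1+t))
            < (2*(k:ℝ)+3+(1-t)/(1+t))/(2*(k:ℝ)+5+(1-t)/(1+t)) := by
          rw [div_lt_div_iff₀ (by linarith) (by linarith)]; nlinarith
        linarith
      rw [measure_union hdisj measurableSet_Icc]
      congr 1
      · apply mu_between Ioo_subset_Ioc_self Ioc_subset_Icc_self (by positivity) ?_ ?_
        · rw [div_le_div_iff₀ (by linarith) (by linarith)]; nlinarith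
        · rw [div_le_one (by linarith)]; linarith
      · apply mu_between Ioo_subset_Icc_self (subset_refl _) (by positivity) ?_ ?_
        · rw [div_le_div_iff₀ (by linarith) (by linarith)]; nlinarith
        · rw [div_le_one (by linarith)]; linarith
    · intro i j hij
      exact (pdD hij).mono inter_subset_right inter_subset_right
  rw [piece1, piece2, piece3]
  -- evaluate the sums
  have sumE : ∑' k:ℕ, ENNReal.ofReal (F (1/(2*(k:ℝ)+4-t)) - F (1/(2*(k:ℝ)+4+t)))
      = ENNReal.ofReal (phiE t 0) := by
    rw [← ENNReal.ofReal_tsum_of_nonneg (even_nonneg ht0 ht1) (even_hasSum ht0 ht1).summable,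
      (even_hasSum ht0 ht1).tsum_eq]
  have sumO : (∑' k:ℕ, (ENNReal.ofReal
          (F ((2*(k:ℝ)+3-(1-t)/(1+t))/(2*(k:ℝ)+5-(1-t)/(1+t))) - F ((2*(k:ℝ)+2)/(2*(k:ℝ)+4)))
        + ENNReal.ofReal
          (F ((2*(k:ℝ)+4)/(2*(k:ℝ)+6)) - F ((2*(k:ℝ)+3+(1-t)/(1+t))/(2*(k:ℝ)+5+(1-t)/(1+t))))))
      = ENNReal.ofReal (phiO t 0) := by
    have hsum : ∀ k:ℕ, (ENNReal.ofReal
          (F ((2*(k:ℝ)+3-(1-t)/(1+t))/(2*(k:ℝ)+5-(1-t)/(1+t))) - F ((2*(k:ℝ)+2)/(2*(k:ℝ)+4)))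
        + ENNReal.ofReal
          (F ((2*(k:ℝ)+4)/(2*(k:ℝ)+6)) - F ((2*(k:ℝ)+3+(1-t)/(1+t))/(2*(k:ℝ)+5+(1-t)/(1+t)))))
        = ENNReal.ofReal
          ((F ((2*(k:ℝ)+3-(1-t)/(1+t))/(2*(k:ℝ)+5-(1-t)/(1+t))) - F ((2*(k:ℝ)+2)/(2*(k:ℝ)+4)))
          + (F ((2*(k:ℝ)+4)/(2*(k:ℝ)+6)) - F ((2*(k:ℝ)+3+(1-t)/(1+t))/(2*(k:ℝ)+5+(1-t)/(1+t))))) :=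
      fun k => (ENNReal.ofReal_add (odd_nonneg1 ht0 ht1 k) (odd_nonneg2 ht0 ht1 k)).symm
    rw [tsum_congr hsum,
      ← ENNReal.ofReal_tsum_of_nonneg (odd_nonneg ht0 ht1) (odd_hasSum ht0 ht1).summable,
      (odd_hasSum ht0 ht1).tsum_eq]
  rw [sumE, sumO]
  have hm0 : 0 ≤ F (1/2) - F (1/(2+t)) := by
    apply sub_nonneg.mpr
    apply F_mono (by positivity) ?_ (by norm_num)
    rw [div_le_div_iff₀ (by linarith) (by norm_num)]; linarith
  have hE0 : 0 ≤ phiE t 0 := by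
    rw [← (even_hasSum ht0 ht1).tsum_eq]
    exact tsum_nonneg (even_nonneg ht0 ht1)
  have hO0 : 0 ≤ phiO t 0 := by
    rw [← (odd_hasSum ht0 ht1).tsum_eq]
    exact tsum_nonneg (odd_nonneg ht0 ht1)
  rw [← ENNReal.ofReal_add hE0 hm0, ← ENNReal.ofReal_add (add_nonneg hE0 hm0) hO0]
  congr 1
  linarith [final_id ht0 ht1]

lemma mu_prob : IsProbabilityMeasure mu := ⟨mu_univ⟩

lemma map_T_eq : Measure.map T mu = mu := by
  haveI := mu_prob
  haveI : IsProbabilityMeasure (Measure.map T mu) :=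
    Measure.isProbabilityMeasure_map measurable_T.aemeasurable
  refine Measure.ext_of_Iic (Measure.map T mu) mu (fun a => ?_)
  rw [Measure.map_apply measurable_T measurableSet_Iic]
  rcases lt_or_ge a 0 with ha | ha
  · have h1 : T ⁻¹' (Iic a) = ∅ := by
      ext x
      simp only [mem_preimage, mem_Iic, mem_empty_iff_false, iff_false, not_le]
      exact lt_of_lt_of_le ha (T_mem x).1
    have h2 : mu (Iic a) = 0 := by
      rw [mu_apply measurableSet_Iic]
      have : Iic a ∩ Ioo 0 1 = ∅ := by
        ext x
        simp only [mem_inter_iff, mem_Iic, mem_Ioo, mem_empty_iff_false, iff_false, not_and]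
        intro h h'
        linarith
      rw [this]
      simp
    rw [h1, h2, measure_empty]
  · rcases lt_or_ge a 1 with ha1 | ha1
    · rw [mu_preimage ha ha1, mu_Iic ha ha1]
    · have h1 : T ⁻¹' (Iic a) = univ :=
        eq_univ_of_forall (fun x => le_trans (T_mem x).2 ha1)
      have h2 : mu (Iic a) = mu univ := by
        rw [mu_apply measurableSet_Iic, mu_apply MeasurableSet.univ, univ_inter]
        have : Iic a ∩ Ioo 0 1 = Ioo 0 1 := by
          apply inter_eq_right.mpr
          intro x hx
          exact le_trans hx.2.le ha1
        rw [this]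
      rw [h1, h2]


/-- μ is a probability measure invariant under the SCF map T. -/
theorem mu_isProbability_and_T_invariant :
    IsProbabilityMeasure mu ∧
      ∀ E : Set ℝ, MeasurableSet E → E ⊆ Set.Icc (0 : ℝ) 1 →
        mu (T ⁻¹' E) = mu E := by
  refine ⟨mu_prob, fun E hE _ => ?_⟩
  rw [← Measure.map_apply measurable_T hE, map_T_eq]

end SCF
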